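/- For every real number x with 0 < x ≤ 1, it holds that 1 − exp(−(x − log(1 + x))) ≥ x²/8. Consequently, 1/(1 − exp(−h(x))) ≤ 8/x² for 0 < x ≤ 1, where h(x) := x − log(1 + x). -/

import Mathlib

open Real

/-- For `0 < x ≤ 1`, with `h(x) = x − log(1+x)`:
`1 − exp(−h(x)) ≥ x²/8`, and consequently `1/(1 − exp(−h(x))) ≤ 8/x²`. -/
theorem one_sub_exp_h_bound (x : ℝ) (hx0 : 0 < x) (hx1 : x ≤ 1) :
    x ^ 2 / 8 ≤ 1 - Real.exp (-(x - Real.log (1 + x))) ∧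
    1 / (1 - Real.exp (-(x - Real.log (1 + x)))) ≤ 8 / x ^ 2 := by
  set L := Real.log (1 + x) with hL
  set h := x - L with hh
  have hx1' : (0:ℝ) < 1 + x := by linarith
  -- h ≥ x²/7, i.e. log(1+x) ≤ x - x²/7
  have ht0 : 0 ≤ x - x ^ 2 / 7 := by nlinarith
  have hexp : 1 + x ≤ Real.exp (x - x ^ 2 / 7) := by
    have h1 : (1 + (x - x ^ 2 / 7) / 2) ^ 2 ≤ Real.exp ((x - x ^ 2 / 7) / 2) ^ 2 := by
      have := Real.add_one_le_exp ((x - x ^ 2 / 7) / 2)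
      nlinarith [Real.exp_pos ((x - x ^ 2 / 7) / 2)]
    rw [← Real.exp_nat_mul] at h1
    norm_num at h1
    calc 1 + x ≤ (1 + (x - x ^ 2 / 7) / 2) ^ 2 := by nlinarith
    _ ≤ _ := by convert h1 using 2; ring
  have hLle : L ≤ x - x ^ 2 / 7 := by
    rw [hL]
    calc Real.log (1 + x) ≤ Real.log (Real.exp (x - x ^ 2 / 7)) :=
          Real.log_le_log hx1' hexp
    _ = x - x ^ 2 / 7 := Real.log_exp _
  have hh7 : x ^ 2 / 7 ≤ h := by rw [hh]; linarith
  have hhpos : 0 < h := by nlinarith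
  have hL0 : 0 ≤ L := Real.log_nonneg (by linarith)
  have hhle : h ≤ x := by rw [hh]; linarith
  -- exp(-h) ≤ 1/(1+h)
  have hexpneg : Real.exp (-h) ≤ 1 / (1 + h) := by
    rw [Real.exp_neg, inv_eq_one_div]
    exact one_div_le_one_div_of_le (by linarith) (by linarith [Real.add_one_le_exp h])
  have hkey : x ^ 2 / 8 ≤ 1 - Real.exp (-h) := by
    have h1h : 0 < 1 + h := by linarith
    have : 1 - 1 / (1 + h) = h / (1 + h) := by field_simp; ring
    have hfrac : x ^ 2 / 8 ≤ h / (1 + h) := by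
      have hx2 : x ^ 2 ≤ 1 := by nlinarith
      rw [div_le_div_iff₀ (by norm_num) h1h]
      nlinarith [mul_le_of_le_one_left hhpos.le hx2]
    linarith [this ▸ hfrac, hexpneg]
  refine ⟨hkey, ?_⟩
  have hx8 : (0:ℝ) < x ^ 2 / 8 := by positivity
  calc 1 / (1 - Real.exp (-h)) ≤ 1 / (x ^ 2 / 8) :=
        one_div_le_one_div_of_le hx8 hkey
  _ = 8 / x ^ 2 := by field_simp
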